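/- det(Eᵀ D E) = Σ_{i_0=1}^N Σ_{i_1=1}^N ⋯ Σ_{i_d=1}^N w_{i_0} w_{i_1} ⋯ w_{i_d} · (x_{i_1} − x)(x_{i_2} − x)² ⋯ (x_{i_d} − x)^d · ∏_{0 ≤ k < l ≤ d} (x_{i_l} − x_{i_k}). -/

import Mathlib

open Matrix

/-- explicit multi-index expansion of `det (Eᵀ D E)` for the
MLS normal matrix with nodes `xs`, weights `w`, and monomial basis
`(· - x)^j`, `j = 0, …, d`. -/
theorem det_ETDE_explicit
    (d N : ℕ) (hN : d + 1 ≤ N) (x : ℝ) (xs : Fin N → ℝ) (w : Fin N → ℝ)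
    (E : Matrix (Fin N) (Fin (d + 1)) ℝ)
    (hE : ∀ i j, E i j = (xs i - x) ^ (j : ℕ))
    (D : Matrix (Fin N) (Fin N) ℝ) (hD : D = Matrix.diagonal w) :
    (Eᵀ * D * E).det =
      ∑ σ : Fin (d + 1) → Fin N,
        (∏ k, w (σ k)) * (∏ k, (xs (σ k) - x) ^ (k : ℕ)) *
          ∏ k : Fin (d + 1), ∏ l ∈ Finset.Ioi k, (xs (σ l) - xs (σ k)) := by
  subst hD
  have hM : Eᵀ * Matrix.diagonal w * E =
      Matrix.of fun j : Fin (d+1) => ∑ i : Fin N,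
        (w i * (xs i - x) ^ (j : ℕ)) •
          (fun j' : Fin (d+1) => (xs i - x) ^ (j' : ℕ)) := by
    ext j j'
    simp only [Matrix.mul_apply, Matrix.mul_diagonal, Matrix.transpose_apply, hE,
      Matrix.of_apply, Finset.sum_apply, Pi.smul_apply, smul_eq_mul]
    rw [Finset.sum_congr rfl fun i _ => by
      rw [Finset.sum_congr rfl fun i2 _ => by
        rw [Matrix.diagonal_apply, mul_ite, mul_zero]]]
    simp [Finset.sum_ite_eq']
    ring_nf
    simp only [neg_add_eq_sub]
  rw [hM]
  have hdet : (Matrix.of fun j : Fin (d+1) => ∑ i : Fin N,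
      (w i * (xs i - x) ^ (j : ℕ)) •
        (fun j' : Fin (d+1) => (xs i - x) ^ (j' : ℕ))).det =
      Matrix.detRowAlternating (fun j : Fin (d+1) => ∑ i : Fin N,
      (w i * (xs i - x) ^ (j : ℕ)) •
        (fun j' : Fin (d+1) => (xs i - x) ^ (j' : ℕ))) := rfl
  rw [hdet]
  have hms := (Matrix.detRowAlternating (R := ℝ) (n := Fin (d+1))).toMultilinearMap.map_sum
    (g := fun (j : Fin (d+1)) (i : Fin N) => (w i * (xs i - x) ^ (j : ℕ)) •
      (fun j' : Fin (d+1) => (xs i - x) ^ (j' : ℕ)))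
  simp only [AlternatingMap.coe_multilinearMap] at hms
  rw [hms]
  refine Finset.sum_congr rfl fun σ _ => ?_
  have hsmul := (Matrix.detRowAlternating (R := ℝ) (n := Fin (d+1))).toMultilinearMap.map_smul_univ
    (fun k : Fin (d+1) => w (σ k) * (xs (σ k) - x) ^ (k : ℕ))
    (fun k : Fin (d+1) => (fun j' : Fin (d+1) => (xs (σ k) - x) ^ (j' : ℕ)))
  simp only [AlternatingMap.coe_multilinearMap] at hsmul
  rw [hsmul]
  have hvdm : Matrix.detRowAlternating
      (fun k : Fin (d+1) => (fun j' : Fin (d+1) => (xs (σ k) - x) ^ (j' : ℕ))) =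
      (Matrix.vandermonde fun k : Fin (d+1) => xs (σ k) - x).det := rfl
  rw [hvdm, Matrix.det_vandermonde, smul_eq_mul, Finset.prod_mul_distrib]
  congr 1
  refine Finset.prod_congr rfl fun k _ => Finset.prod_congr rfl fun l _ => ?_
  ring
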